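/- Consider the 4×4 symmetric matrix M(y) = [[1−y₁, 0, −y₃, −y₃], [0, −y₂, −y₁, 0], [−y₃, −y₁, −y₃, 0], [−y₃, 0, 0, 0]] for y ∈ ℝ³. If M(y) is positive semidefinite then y₃ = 0 and y₁ = 0; hence the supremum of y₁ over the feasible set is 0. -/

import Mathlib

lemma quad_lin_nonneg_imp_zero (a b : ℝ) (h : ∀ t : ℝ, 0 ≤ a * t ^ 2 + b * t) : b = 0 := by
  by_contra hb
  have hc : (0:ℝ) < |a| + 1 := by positivity
  have h1 := h (-b / (|a| + 1))
  have hb2 : 0 < b ^ 2 := by positivity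
  have ha : a ≤ |a| := le_abs_self a
  have key : a * (-b / (|a| + 1)) ^ 2 + b * (-b / (|a| + 1))
      = b ^ 2 / (|a| + 1) ^ 2 * (a - (|a| + 1)) := by
    field_simp; ring
  rw [key] at h1
  nlinarith [mul_pos (div_pos hb2 (by positivity : (0:ℝ) < (|a|+1)^2)) (by linarith : (0:ℝ) < (|a|+1) - a)]

lemma forces_zero (y₁ y₂ y₃ : ℝ)
    (h : (!![1 - y₁, 0, -y₃, -y₃; 0, -y₂, -y₁, 0; -y₃, -y₁, -y₃, 0; -y₃, 0, 0, 0]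
        : Matrix (Fin 4) (Fin 4) ℝ).PosSemidef) : y₃ = 0 ∧ y₁ = 0 := by
  have h3 : y₃ = 0 := by
    have h0 : ∀ t : ℝ, 0 ≤ (1 - y₁) * t ^ 2 + (-2 * y₃) * t := by
      intro t
      have := h.dotProduct_mulVec_nonneg ![t, 0, 0, 1]
      simp [Matrix.mulVec, dotProduct, Fin.sum_univ_succ] at this
      nlinarith [this]
    have := quad_lin_nonneg_imp_zero _ _ h0
    linarith
  refine ⟨h3, ?_⟩
  have h0 : ∀ t : ℝ, 0 ≤ (-y₂) * t ^ 2 + (-2 * y₁) * t := by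
    intro t
    have := h.dotProduct_mulVec_nonneg ![0, t, 1, 0]
    simp [Matrix.mulVec, dotProduct, Fin.sum_univ_succ, h3] at this
    nlinarith [this]
  have := quad_lin_nonneg_imp_zero _ _ h0
  linarith

/-- Dual of the singularity-degree-two counter-example: feasibility forces
`y₃ = 0` and `y₁ = 0`, hence the supremum of `y₁` is `0`. -/
theorem counterexample_dual :
    (∀ y₁ y₂ y₃ : ℝ,
      (!![1 - y₁, 0, -y₃, -y₃; 0, -y₂, -y₁, 0; -y₃, -y₁, -y₃, 0; -y₃, 0, 0, 0]
        : Matrix (Fin 4) (Fin 4) ℝ).PosSemidef → y₃ = 0 ∧ y₁ = 0) ∧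
    IsGreatest {v : ℝ | ∃ y₂ y₃ : ℝ,
      (!![1 - v, 0, -y₃, -y₃; 0, -y₂, -v, 0; -y₃, -v, -y₃, 0; -y₃, 0, 0, 0]
        : Matrix (Fin 4) (Fin 4) ℝ).PosSemidef} 0 := by
  refine ⟨fun y₁ y₂ y₃ h => forces_zero y₁ y₂ y₃ h, ⟨0, 0, ?_⟩, ?_⟩
  · refine Matrix.PosSemidef.of_dotProduct_mulVec_nonneg ?_ ?_
    · ext i j; fin_cases i <;> fin_cases j <;> rfl
    · intro x
      have : (0:ℝ) ≤ x 0 * x 0 := mul_self_nonneg _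
      simp [Matrix.mulVec, dotProduct, Fin.sum_univ_succ]
      nlinarith [this]
  · rintro v ⟨y₂, y₃, h⟩
    have := forces_zero v y₂ y₃ h
    linarith [this.2]
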